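/- Fix agent a with true preference r_a and an outside option demotion strategy d_a. Suppose there exists a deterministic rank-minimizing assignment y* for (r_a, p_{-a}) with y*_{ao} = 1 for some truly acceptable o (R(o,r_a) < R(∅,r_a)). Then |Y*(d_a, p_{-a})| ≤ |Y*(r_a, p_{-a})|, where Y*(p) denotes the set of deterministic rank-minimizing assignments for p. -/

import Mathlib

open Finset
open scoped Classical

variable {A O : Type*}

/-- A strict preference ranking: a bijection from object types to positions. -/
abbrev Pref (O : Type*) [Fintype O] := O ≃ Fin (Fintype.card O)

/-- The rank of object `o` under ranking `p` (1 = best). -/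
def rk [Fintype O] (p : Pref O) (o : O) : ℕ := (p o : ℕ) + 1

/-- A (probabilistic) assignment. -/
def IsAssignment [Fintype A] [Fintype O] (q : O → ℕ) (x : A → O → ℝ) : Prop :=
  (∀ a o, 0 ≤ x a o ∧ x a o ≤ 1) ∧ (∀ a, ∑ o, x a o = 1) ∧ (∀ o, ∑ a, x a o ≤ (q o : ℝ))

def IsDeterministic [Fintype A] [Fintype O] (x : A → O → ℝ) : Prop :=
  ∀ a o, x a o = 0 ∨ x a o = 1

/-- The rank value (sum of expected ranks). -/
def RV [Fintype A] [Fintype O] (p : A → Pref O) (x : A → O → ℝ) : ℝ :=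
  ∑ a, ∑ o, (rk (p a) o : ℝ) * x a o

/-- `x` is a rank-minimizing assignment for profile `p`. -/
def RankMin [Fintype A] [Fintype O] (q : O → ℕ) (p : A → Pref O) (x : A → O → ℝ) : Prop :=
  IsAssignment q x ∧ ∀ y, IsAssignment q y → RV p x ≤ RV p y

/-- `x` is wasteful for profile `p`. -/
def Wasteful [Fintype A] [Fintype O] (q : O → ℕ) (p : A → Pref O) (x : A → O → ℝ) : Prop :=
  ∃ o o' a, (∑ a', x a' o) < (q o : ℝ) ∧ 0 < x a o' ∧ rk (p a) o < rk (p a) o'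

/-- `k̄(p_a)`: the minimal `k` such that the types ranked at or above `k` have
total capacity at least `|A|`. -/
noncomputable def kbar [Fintype O] (nA : ℕ) (q : O → ℕ) (p : Pref O) : ℕ :=
  sInf {k | nA ≤ ∑ o ∈ Finset.univ.filter (fun o => rk p o ≤ k), q o}

/-- A deterministic assignment, viewed as a map from agents to objects, is feasible. -/
def DetOK [Fintype A] [Fintype O] (q : O → ℕ) (d : A → O) : Prop :=
  ∀ o, (Finset.univ.filter (fun a => d a = o)).card ≤ q o

/-- The 0-1 matrix of a deterministic assignment. -/
noncomputable def detMat [Fintype A] [Fintype O] (d : A → O) : A → O → ℝ :=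
  fun a o => if d a = o then 1 else 0

/-- The set of deterministic rank-minimizing assignments for `p`
(minimizing over all probabilistic assignments). -/
noncomputable def Ystar [Fintype A] [Fintype O] (q : O → ℕ) (p : A → Pref O) :
    Finset (A → O) :=
  Finset.univ.filter
    (fun d => DetOK q d ∧ ∀ x, IsAssignment q x → RV p (detMat d) ≤ RV p x)

/-- The uniform rank-minimizing mechanism. -/
noncomputable def fU [Fintype A] [Fintype O] (q : O → ℕ) (p : A → Pref O) : A → O → ℝ :=
  fun a o => (∑ d ∈ Ystar q p, detMat d a o) / (Ystar q p).card

/-- Agent `a` (with true ranking `r`) weakly prefers `x` to `x'`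
(first-order stochastic dominance). -/
def WeakPrefAt [Fintype A] [Fintype O] (r : Pref O) (a : A) (x x' : A → O → ℝ) : Prop :=
  ∀ j : ℕ, ∑ o ∈ Finset.univ.filter (fun o => rk r o ≤ j), x' a o ≤
           ∑ o ∈ Finset.univ.filter (fun o => rk r o ≤ j), x a o

/-- Agent `a` strictly prefers `x` to `x'`. -/
def StrictPrefAt [Fintype A] [Fintype O] (r : Pref O) (a : A) (x x' : A → O → ℝ) : Prop :=
  WeakPrefAt r a x x' ∧ ∃ j : ℕ, j < Fintype.card O ∧
    ∑ o ∈ Finset.univ.filter (fun o => rk r o ≤ j), x' a o <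
    ∑ o ∈ Finset.univ.filter (fun o => rk r o ≤ j), x a o

/-- `d` is an outside option demotion strategy for true ranking `r`. -/
def ODS [Fintype O] (null : O) (r d : Pref O) : Prop :=
  (∀ o, rk r o < rk r null → rk d o = rk r o) ∧ rk d null = Fintype.card O

/-- The refusal map `g`: each agent keeps probability on truly acceptable types
and moves all remaining mass to the null type. -/
noncomputable def refuse [Fintype A] [Fintype O] (null : O) (r : A → Pref O)
    (x : A → O → ℝ) : A → O → ℝ :=
  fun a o =>
    if rk (r a) o < rk (r a) null then x a o
    else if o = null then
      ∑ o' ∈ Finset.univ.filter (fun o' => rk (r a) null ≤ rk (r a) o'), x a o'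
    else 0

/-- Equal treatment of equals for a mechanism. -/
def SatisfiesETE [Fintype A] [Fintype O] (q : O → ℕ)
    (f : (A → Pref O) → A → O → ℝ) : Prop :=
  ∀ (p : A → Pref O) (a a' : A),
    (∀ o, rk (p a) o ≤ kbar (Fintype.card A) q (p a) → p a' o = p a o) →
    ∀ o, f p a o = f p a' o

section Aux

variable [Fintype A] [Fintype O] [DecidableEq A]

lemma rv_detMat (p : A → Pref O) (z : A → O) :
    RV p (detMat z) = ∑ a, (rk (p a) (z a) : ℝ) := by
  unfold RV detMat
  refine Finset.sum_congr rfl fun a _ => ?_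
  rw [Finset.sum_eq_single (z a)]
  · simp
  · intro o _ ho; simp [Ne.symm ho]
  · simp

lemma detMat_assignment (q : O → ℕ) (z : A → O) (hz : DetOK q z) :
    IsAssignment q (detMat z) := by
  refine ⟨fun a o => ?_, fun a => ?_, fun o => ?_⟩
  · unfold detMat; split <;> norm_num
  · unfold detMat; simp
  · have h := hz o
    unfold detMat
    calc ∑ a, (if z a = o then (1:ℝ) else 0)
        = ((Finset.univ.filter (fun a => z a = o)).card : ℝ) := by
          rw [Finset.sum_boole]
      _ ≤ (q o : ℝ) := by exact_mod_cast h

lemma mem_Ystar (q : O → ℕ) (p : A → Pref O) (z : A → O) :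
    z ∈ Ystar q p ↔ DetOK q z ∧ ∀ x, IsAssignment q x → RV p (detMat z) ≤ RV p x := by
  simp [Ystar]

lemma ods_rank_ge {null : O} {ra da : Pref O} (h : ODS null ra da) (o : O)
    (ho : rk ra null ≤ rk ra o) : rk ra null ≤ rk da o := by
  by_contra hlt
  push_neg at hlt
  set o' : O := ra.symm (da o) with ho'
  have hra : ra o' = da o := ra.apply_symm_apply _
  have hlt' : rk ra o' < rk ra null := by
    unfold rk at hlt ⊢; omega
  have hkey : rk da o' = rk ra o' := h.1 o' hlt'
  have : (da o' : ℕ) = (da o : ℕ) := by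
    unfold rk at hkey; rw [hra] at hkey; omega
  have hoo : o' = o := da.injective (Fin.ext this)
  rw [hoo] at hlt'
  omega

lemma detOK_update_null (q : O → ℕ) (null : O) (hnull : Fintype.card A ≤ q null)
    (a : A) (z : A → O) (hz : DetOK q z) : DetOK q (Function.update z a null) := by
  intro o
  by_cases ho : o = null
  · rw [ho]
    calc (Finset.univ.filter (fun a' => Function.update z a null a' = null)).card
        ≤ Finset.univ.card := Finset.card_filter_le _ _
      _ = Fintype.card A := Finset.card_univ
      _ ≤ q null := hnull
  · refine le_trans (Finset.card_le_card ?_) (hz o)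
    intro a' ha'
    simp only [Finset.mem_filter, Finset.mem_univ, true_and] at ha' ⊢
    rcases eq_or_ne a' a with rfl | hne
    · rw [Function.update_self] at ha'; exact (ho ha'.symm).elim
    · rwa [Function.update_of_ne hne] at ha'

lemma rv_update_detMat (p : A → Pref O) (a : A) (π : Pref O) (z : A → O) :
    RV (Function.update p a π) (detMat z) =
      (rk π (z a) : ℝ) + ∑ a' ∈ Finset.univ.erase a, (rk (p a') (z a') : ℝ) := by
  rw [rv_detMat, ← Finset.add_sum_erase _ _ (Finset.mem_univ a)]
  congr 1
  · rw [Function.update_self]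
  · exact Finset.sum_congr rfl fun a' ha' => by
      rw [Function.update_of_ne (Finset.ne_of_mem_erase ha')]

end Aux

/-- Claim 2: if some deterministic rank-minimizing assignment for the
truthful profile gives `a` a truly acceptable type, then the ODS profile has no more
deterministic rank-minimizing assignments than the truthful one. -/
theorem stmt11 [Fintype A] [Fintype O] [DecidableEq A]
    (q : O → ℕ) (null : O) (hnull : Fintype.card A ≤ q null)
    (a : A) (ra da : Pref O) (hods : ODS null ra da)
    (p : A → Pref O)
    (hex : ∃ d ∈ Ystar q (Function.update p a ra), rk ra (d a) < rk ra null) :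
    (Ystar q (Function.update p a da)).card ≤
      (Ystar q (Function.update p a ra)).card := by
  classical
  obtain ⟨y, hy, hya⟩ := hex
  rw [mem_Ystar] at hy
  obtain ⟨hyOK, hymin⟩ := hy
  have hyA : IsAssignment q (detMat y) := detMat_assignment q y hyOK
  set C : (A → O) → ℝ := fun z => ∑ a' ∈ Finset.univ.erase a, (rk (p a') (z a') : ℝ) with hC
  have hrv : ∀ (π : Pref O) (z : A → O),
      RV (Function.update p a π) (detMat z) = (rk π (z a) : ℝ) + C z :=
    fun π z => rv_update_detMat p a π z
  have hCup : ∀ z : A → O, C (Function.update z a null) = C z := by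
    intro z
    exact Finset.sum_congr rfl fun a' ha' => by
      rw [Function.update_of_ne (Finset.ne_of_mem_erase ha')]
  have hRVy : RV (Function.update p a da) (detMat y)
      = RV (Function.update p a ra) (detMat y) := by
    rw [hrv, hrv, hods.1 (y a) hya]
  have key : ∀ z ∈ Ystar q (Function.update p a da),
      RV (Function.update p a da) (detMat z) ≤ RV (Function.update p a ra) (detMat y) := by
    intro z hz
    rw [mem_Ystar] at hz
    have := hz.2 _ hyA
    rwa [hRVy] at this
  apply Finset.card_le_card_of_injOn
    (fun z => if rk ra (z a) < rk ra null then z else Function.update z a null)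
  · intro z hz
    have hzkey := key z hz
    rw [Finset.mem_coe, mem_Ystar] at hz ⊢
    obtain ⟨hzOK, hzmin⟩ := hz
    by_cases hc : rk ra (z a) < rk ra null
    · simp only [if_pos hc]
      refine ⟨hzOK, fun x hx => ?_⟩
      have h1 : RV (Function.update p a ra) (detMat z)
          = RV (Function.update p a da) (detMat z) := by
        rw [hrv, hrv, hods.1 (z a) hc]
      exact h1 ▸ le_trans hzkey (hymin x hx)
    · simp only [if_neg hc]
      push_neg at hc
      have hda : rk ra null ≤ rk da (z a) := ods_rank_ge hods _ hc
      refine ⟨detOK_update_null q null hnull a z hzOK, fun x hx => ?_⟩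
      have h2 : RV (Function.update p a ra) (detMat (Function.update z a null))
          ≤ RV (Function.update p a da) (detMat z) := by
        simp only [hrv, Function.update_self, hCup]
        have : (rk ra null : ℝ) ≤ (rk da (z a) : ℝ) := by exact_mod_cast hda
        linarith
      exact le_trans h2 (le_trans hzkey (hymin x hx))
  · intro z1 h1 z2 h2 heq
    have h1' : z1 ∈ Ystar q (Function.update p a da) := h1
    have h2' : z2 ∈ Ystar q (Function.update p a da) := h2
    have hpin : ∀ z ∈ Ystar q (Function.update p a da),
        ¬ rk ra (z a) < rk ra null → rk da (z a) = rk ra null := by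
      intro z hz hcn
      push_neg at hcn
      have hda : rk ra null ≤ rk da (z a) := ods_rank_ge hods _ hcn
      have hkey := key z hz
      rw [mem_Ystar] at hz
      have hupOK := detOK_update_null q null hnull a z hz.1
      have hge : RV (Function.update p a ra) (detMat y)
          ≤ RV (Function.update p a ra) (detMat (Function.update z a null)) :=
        hymin _ (detMat_assignment q _ hupOK)
      simp only [hrv, Function.update_self, hCup] at hge hkey
      have hle : (rk da (z a) : ℝ) ≤ (rk ra null : ℝ) := by linarith
      have h' : rk da (z a) ≤ rk ra null := by exact_mod_cast hle
      omega
    simp only at heq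
    by_cases hc1 : rk ra (z1 a) < rk ra null <;>
      by_cases hc2 : rk ra (z2 a) < rk ra null
    · rwa [if_pos hc1, if_pos hc2] at heq
    · rw [if_pos hc1, if_neg hc2] at heq
      have hz1 : z1 a = null := by
        have := congrFun heq a
        rwa [Function.update_self] at this
      rw [hz1] at hc1; omega
    · rw [if_neg hc1, if_pos hc2] at heq
      have hz2 : z2 a = null := by
        have := congrFun heq a
        rw [Function.update_self] at this; exact this.symm
      rw [hz2] at hc2; omega
    · rw [if_neg hc1, if_neg hc2] at heq
      have e1 := hpin z1 h1' hc1
      have e2 := hpin z2 h2' hc2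
      have hza : z1 a = z2 a := by
        apply da.injective
        apply Fin.ext
        unfold rk at e1 e2; omega
      funext a'
      rcases eq_or_ne a' a with rfl | hne
      · exact hza
      · have := congrFun heq a'
        rwa [Function.update_of_ne hne, Function.update_of_ne hne] at this
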